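/- Let X ~ N_p(0, Σ) with λ₁ > λ₂ > 0 and unit leading eigenvector u₁, and let f = u₁ᵀX. Partition {1,...,p} into nonempty blocks A and B, and let ū_{1,A} = (1/|A|) Σ_{j∈A} (u₁)_j and ū_{1,B} defined similarly. Let I₁,...,I_K (K ≥ 2) be an interval partition of ℝ with each interval of positive probability under f. Define m_{k,A} = (1/|A|) Σ_{j∈A} E[X_j | f ∈ I_k], similarly m_{k,B}, and D_pop = max over pairs k < ℓ of max(|m_{k,A} − m_{ℓ,A}|, |m_{k,B} − m_{ℓ,B}|). If max(|ū_{1,A}|, |ū_{1,B}|) > 0, then D_pop ≥ max(|ū_{1,A}|, |ū_{1,B}|) · |E[f | f ∈ I_max] − E[f | f ∈ I_min]| > 0, where I_min and I_max are the leftmost and rightmost intervals. -/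

import Mathlib

open MeasureTheory ProbabilityTheory

/-- Conditional mean of `g` given the event `C`: `E[g | C] = (∫_C g dμ) / μ(C)`. -/
noncomputable def condMeanEvent {Ω : Type*} [MeasurableSpace Ω] (μ : Measure Ω)
    (g : Ω → ℝ) (C : Set Ω) : ℝ :=
  (∫ ω in C, g ω ∂μ) / (μ C).toReal

section AuxLemmas
open Real NNReal
open scoped ENNReal


lemma integrable_id_gaussianReal (v : ℝ≥0) : Integrable id (gaussianReal 0 v) := by
  by_cases hv : v = 0
  · subst hv; simp only [gaussianReal_zero_var]
    refine ⟨aestronglyMeasurable_id, ?_⟩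
    simp [HasFiniteIntegral, lintegral_dirac]
  · rw [gaussianReal_of_var_ne_zero _ hv,
      integrable_withDensity_iff (measurable_gaussianPDF _ _)
        (ae_of_all _ fun x => ENNReal.ofReal_lt_top)]
    have hb : (0:ℝ) < (2 * (v:ℝ))⁻¹ := by positivity
    have := (integrable_mul_exp_neg_mul_sq hb).const_mul ((Real.sqrt (2 * Real.pi * v))⁻¹)
    apply this.congr
    refine Filter.Eventually.of_forall fun x => ?_
    simp only [gaussianPDF, gaussianPDFReal, id]
    rw [ENNReal.toReal_ofReal (by positivity)]
    ring_nf

lemma integrable_of_map_gaussian {Ω} [MeasurableSpace Ω] {μ : Measure Ω} {g : Ω → ℝ}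
    (hg : Measurable g) {v : ℝ≥0} (h : Measure.map g μ = gaussianReal 0 v) :
    Integrable g μ := by
  have h2 := integrable_id_gaussianReal v
  rw [← h, integrable_map_measure aestronglyMeasurable_id hg.aemeasurable] at h2
  exact h2


lemma integral_smooth_mul_eq_zero {Ω} [MeasurableSpace Ω] (μ : Measure Ω) [IsProbabilityMeasure μ]
    {f Y : Ω → ℝ} (hf : Measurable f) (hY : Measurable Y)
    (hfint : Integrable f μ) (hYint : Integrable Y μ)
    (hsym : ∀ a : ℝ, Measure.map (fun ω => f ω + a * Y ω) μ
      = Measure.map (fun ω => f ω + (-a) * Y ω) μ)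
    {ψ : ℝ → ℝ} (hψ : Continuous ψ) (hψ1 : ∀ x, |ψ x| ≤ 1) :
    ∫ ω, ψ (f ω) * Y ω ∂μ = 0 := by
  set φ : ℝ → ℝ := fun x => ∫ u in (0:ℝ)..x, ψ u with hφdef
  have hφderiv : ∀ x : ℝ, HasDerivAt φ (ψ x) x := fun x =>
    intervalIntegral.integral_hasDerivAt_right (hψ.intervalIntegrable _ _)
      (hψ.stronglyMeasurableAtFilter _ _) hψ.continuousAt
  have hφcont : Continuous φ :=
    continuous_iff_continuousAt.2 fun x => (hφderiv x).continuousAt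
  have hφbound : ∀ x : ℝ, |φ x| ≤ |x| := by
    intro x
    have h := intervalIntegral.norm_integral_le_of_norm_le_const
      (C := 1) (f := ψ) (a := (0:ℝ)) (b := x) (fun u _ => by simpa using hψ1 u)
    simpa using h
  set F : ℝ → Ω → ℝ := fun a ω => φ (f ω + a * Y ω) with hFdef
  have hmeas : ∀ a : ℝ, Measurable fun ω => f ω + a * Y ω :=
    fun a => hf.add (hY.const_mul a)
  have heven : ∀ a : ℝ, ∫ ω, F a ω ∂μ = ∫ ω, F (-a) ω ∂μ := by
    intro a
    have h1 : ∫ ω, F a ω ∂μ = ∫ x, φ x ∂(Measure.map (fun ω => f ω + a * Y ω) μ) :=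
      (integral_map (hmeas a).aemeasurable hφcont.aestronglyMeasurable).symm
    have h2 : ∫ ω, F (-a) ω ∂μ = ∫ x, φ x ∂(Measure.map (fun ω => f ω + (-a) * Y ω) μ) :=
      (integral_map (hmeas (-a)).aemeasurable hφcont.aestronglyMeasurable).symm
    rw [h1, h2, hsym a]
  have hderiv : HasDerivAt (fun a => ∫ ω, F a ω ∂μ)
      (∫ ω, ψ (f ω + 0 * Y ω) * Y ω ∂μ) 0 := by
    refine (hasDerivAt_integral_of_dominated_loc_of_deriv_le
      (s := Metric.ball (0:ℝ) 1) (μ := μ) (x₀ := (0:ℝ)) (F := F)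
      (F' := fun a ω => ψ (f ω + a * Y ω) * Y ω)
      (bound := fun ω => |Y ω|) (Metric.ball_mem_nhds _ one_pos) ?_ ?_ ?_ ?_ ?_ ?_).2
    · exact Filter.Eventually.of_forall fun a =>
        (hφcont.measurable.comp (hmeas a)).aestronglyMeasurable
    · refine hfint.abs.mono' ((hφcont.measurable.comp (hmeas 0)).aestronglyMeasurable) ?_
      refine Filter.Eventually.of_forall fun ω => ?_
      simp only [Real.norm_eq_abs, hFdef]
      exact (hφbound (f ω + 0 * Y ω)).trans (by simp)
    · exact ((hψ.measurable.comp (hmeas 0)).mul hY).aestronglyMeasurable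
    · refine Filter.Eventually.of_forall fun ω a _ => ?_
      calc ‖ψ (f ω + a * Y ω) * Y ω‖ = |ψ (f ω + a * Y ω)| * |Y ω| := abs_mul _ _
        _ ≤ 1 * |Y ω| := mul_le_mul_of_nonneg_right (hψ1 _) (abs_nonneg _)
        _ = |Y ω| := one_mul _
    · exact hYint.abs
    · refine Filter.Eventually.of_forall fun ω a _ => ?_
      have hinner : HasDerivAt (fun a : ℝ => f ω + a * Y ω) (Y ω) a := by
        simpa using ((hasDerivAt_id a).mul_const (Y ω)).const_add (f ω)
      exact (hφderiv (f ω + a * Y ω)).comp a hinner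
  set d := ∫ ω, ψ (f ω + 0 * Y ω) * Y ω ∂μ with hd
  have h0 : HasDerivAt (fun a => ∫ ω, F a ω ∂μ) d (-0 : ℝ) := by rwa [neg_zero]
  have hneg := h0.comp (0 : ℝ) (hasDerivAt_neg (0 : ℝ))
  have hcomp : ((fun a => ∫ ω, F a ω ∂μ) ∘ fun a : ℝ => -a) = fun a => ∫ ω, F a ω ∂μ :=
    funext fun a => (heven a).symm
  rw [hcomp] at hneg
  have hd0 : d = 0 := by have := hderiv.unique hneg; linarith [this]
  have hgoal : ∫ ω, ψ (f ω) * Y ω ∂μ = d := by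
    rw [hd]; congr 1; funext ω; rw [zero_mul, add_zero]
  rw [hgoal, hd0]

lemma setIntegral_eq_zero_of_sym {Ω : Type*} [MeasurableSpace Ω] (μ : Measure Ω)
    [IsProbabilityMeasure μ]
    {f Y : Ω → ℝ} (hf : Measurable f) (hY : Measurable Y)
    (hfint : Integrable f μ) (hYint : Integrable Y μ)
    (hsym : ∀ a : ℝ, Measure.map (fun ω => f ω + a * Y ω) μ
      = Measure.map (fun ω => f ω + (-a) * Y ω) μ)
    {s : Set ℝ} (hs : MeasurableSet s) :
    ∫ ω in f ⁻¹' s, Y ω ∂μ = 0 := by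
  -- Step 1: the Iic case
  have hIic : ∀ t : ℝ, ∫ ω in f ⁻¹' (Set.Iic t), Y ω ∂μ = 0 := by
    intro t
    set ψ : ℕ → ℝ → ℝ := fun n x => max 0 (min 1 (1 - n * (x - t))) with hψdef
    have hψcont : ∀ n, Continuous (ψ n) := by
      intro n
      exact continuous_const.max (continuous_const.min (by fun_prop))
    have hψ1 : ∀ n x, |ψ n x| ≤ 1 := by
      intro n x
      rw [abs_le]
      constructor
      · have : (0:ℝ) ≤ ψ n x := le_max_left _ _
        linarith
      · exact max_le zero_le_one (min_le_left _ _)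
    have hkey : ∀ n, ∫ ω, ψ n (f ω) * Y ω ∂μ = 0 := fun n =>
      integral_smooth_mul_eq_zero μ hf hY hfint hYint hsym (hψcont n) (hψ1 n)
    -- dominated convergence
    have htendsto : Filter.Tendsto (fun n => ∫ ω, ψ n (f ω) * Y ω ∂μ) Filter.atTop
        (nhds (∫ ω, (f ⁻¹' (Set.Iic t)).indicator Y ω ∂μ)) := by
      refine tendsto_integral_of_dominated_convergence (fun ω => |Y ω|)
        (fun n => (((hψcont n).measurable.comp hf).mul hY).aestronglyMeasurable)
        hYint.abs ?_ ?_
      · intro n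
        refine Filter.Eventually.of_forall fun ω => ?_
        calc ‖ψ n (f ω) * Y ω‖ = |ψ n (f ω)| * |Y ω| := abs_mul _ _
          _ ≤ 1 * |Y ω| := mul_le_mul_of_nonneg_right (hψ1 n _) (abs_nonneg _)
          _ = |Y ω| := one_mul _
      · refine Filter.Eventually.of_forall fun ω => ?_
        by_cases hω : f ω ∈ Set.Iic t
        · have hval : ∀ n : ℕ, ψ n (f ω) * Y ω = Y ω := by
            intro n
            have h1 : (n:ℝ) * (f ω - t) ≤ 0 :=
              mul_nonpos_of_nonneg_of_nonpos (Nat.cast_nonneg n) (by simpa using hω)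
            have : ψ n (f ω) = 1 := by
              rw [hψdef]
              simp only
              rw [min_eq_left (by linarith), max_eq_right zero_le_one]
            rw [this, one_mul]
          rw [Set.indicator_of_mem (show ω ∈ f ⁻¹' Set.Iic t from hω)]
          simp only [hval]
          exact tendsto_const_nhds
        · have hgt : t < f ω := not_le.mp hω
          rw [Set.indicator_of_notMem (show ω ∉ f ⁻¹' Set.Iic t from hω)]
          have hev : ∀ᶠ n : ℕ in Filter.atTop, ψ n (f ω) * Y ω = 0 := by
            have := Filter.eventually_gt_atTop (⌈(f ω - t)⁻¹⌉₊)
            filter_upwards [Filter.eventually_ge_atTop (⌈(f ω - t)⁻¹⌉₊ + 1)] with n hn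
            have hpos : 0 < f ω - t := by linarith
            have h1 : (1:ℝ) ≤ (n:ℝ) * (f ω - t) := by
              have h2 : (f ω - t)⁻¹ ≤ (n:ℝ) := by
                calc (f ω - t)⁻¹ ≤ (⌈(f ω - t)⁻¹⌉₊ : ℝ) := Nat.le_ceil _
                  _ ≤ (n:ℝ) := by exact_mod_cast le_trans (Nat.le_succ _) hn
              calc (1:ℝ) = (f ω - t)⁻¹ * (f ω - t) := (inv_mul_cancel₀ hpos.ne').symm
                _ ≤ (n:ℝ) * (f ω - t) := mul_le_mul_of_nonneg_right h2 hpos.le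
            have : ψ n (f ω) = 0 := by
              rw [hψdef]
              simp only
              rw [max_eq_left]
              exact le_trans (min_le_right _ _) (by linarith)
            rw [this, zero_mul]
          exact Filter.Tendsto.congr' (Filter.EventuallyEq.symm hev) tendsto_const_nhds
    have hlim : ∫ ω, (f ⁻¹' (Set.Iic t)).indicator Y ω ∂μ = 0 :=
      tendsto_nhds_unique htendsto (by simpa [hkey] using tendsto_const_nhds)
    rw [← integral_indicator (hf measurableSet_Iic)]
    exact hlim
  -- Step 2: extend to all measurable sets via measure extensionality
  set νp : Measure ℝ := (μ.withDensity fun ω => ENNReal.ofReal (Y ω)).map f with hνp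
  set νm : Measure ℝ := (μ.withDensity fun ω => ENNReal.ofReal (-Y ω)).map f with hνm
  have hYp : Measurable fun ω => ENNReal.ofReal (Y ω) := hY.ennreal_ofReal
  have hYm : Measurable fun ω => ENNReal.ofReal (-Y ω) := hY.neg.ennreal_ofReal
  have hfinp : ∫⁻ ω, ENNReal.ofReal (Y ω) ∂μ < ⊤ := by
    calc ∫⁻ ω, ENNReal.ofReal (Y ω) ∂μ ≤ ∫⁻ ω, ‖Y ω‖₊ ∂μ := by
          refine lintegral_mono fun ω => ?_
          rw [← ENNReal.ofReal_coe_nnreal, coe_nnnorm]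
          exact ENNReal.ofReal_le_ofReal (le_abs_self _)
      _ < ⊤ := hYint.2
  have hfinm : ∫⁻ ω, ENNReal.ofReal (-Y ω) ∂μ < ⊤ := by
    calc ∫⁻ ω, ENNReal.ofReal (-Y ω) ∂μ ≤ ∫⁻ ω, ‖Y ω‖₊ ∂μ := by
          refine lintegral_mono fun ω => ?_
          rw [← ENNReal.ofReal_coe_nnreal, coe_nnnorm]
          exact ENNReal.ofReal_le_ofReal (by rw [Real.norm_eq_abs]; exact neg_le_abs _)
      _ < ⊤ := hYint.2
  have hνpapp : ∀ u : Set ℝ, MeasurableSet u → νp u = ∫⁻ ω in f ⁻¹' u, ENNReal.ofReal (Y ω) ∂μ := by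
    intro u hu
    rw [hνp, Measure.map_apply hf hu, withDensity_apply _ (hf hu)]
  have hνmapp : ∀ u : Set ℝ, MeasurableSet u → νm u = ∫⁻ ω in f ⁻¹' u, ENNReal.ofReal (-Y ω) ∂μ := by
    intro u hu
    rw [hνm, Measure.map_apply hf hu, withDensity_apply _ (hf hu)]
  have hdiff : ∀ u : Set ℝ, MeasurableSet u →
      ∫ ω in f ⁻¹' u, Y ω ∂μ = (νp u).toReal - (νm u).toReal := by
    intro u hu
    rw [hνpapp u hu, hνmapp u hu]
    exact integral_eq_lintegral_pos_part_sub_lintegral_neg_part hYint.restrict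
  have hνpfin : ∀ u : Set ℝ, MeasurableSet u → νp u ≠ ⊤ := by
    intro u hu
    rw [hνpapp u hu]
    exact ((lintegral_mono' Measure.restrict_le_self le_rfl).trans_lt hfinp).ne
  have hνmfin : ∀ u : Set ℝ, MeasurableSet u → νm u ≠ ⊤ := by
    intro u hu
    rw [hνmapp u hu]
    exact ((lintegral_mono' Measure.restrict_le_self le_rfl).trans_lt hfinm).ne
  have hfinpM : IsFiniteMeasure νp := by
    constructor
    exact lt_of_le_of_ne (le_top) (hνpfin Set.univ MeasurableSet.univ)
  have heq : νp = νm := by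
    refine @Measure.ext_of_Iic ℝ _ _ _ _ _ _ νp νm hfinpM fun t => ?_
    have h := hIic t
    rw [hdiff _ measurableSet_Iic] at h
    have h2 : (νp (Set.Iic t)).toReal = (νm (Set.Iic t)).toReal := by linarith
    exact (ENNReal.toReal_eq_toReal_iff' (hνpfin _ measurableSet_Iic)
      (hνmfin _ measurableSet_Iic)).mp h2
  rw [hdiff s hs, heq]
  ring

lemma condMean_strict {Ω : Type*} [MeasurableSpace Ω] (μ : Measure Ω) [IsProbabilityMeasure μ]
    {f : Ω → ℝ} (hf : Measurable f) (hfint : Integrable f μ)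
    (hatom : ∀ c : ℝ, μ (f ⁻¹' {c}) = 0)
    {s₀ s₁ : Set ℝ} (h0 : MeasurableSet s₀) (h1 : MeasurableSet s₁)
    (hlt : ∀ x ∈ s₀, ∀ y ∈ s₁, x < y)
    (hm0 : 0 < μ (f ⁻¹' s₀)) (hm1 : 0 < μ (f ⁻¹' s₁)) :
    condMeanEvent μ f (f ⁻¹' s₀) < condMeanEvent μ f (f ⁻¹' s₁) := by
  have hne0 : s₀.Nonempty := by
    by_contra h
    rw [Set.not_nonempty_iff_eq_empty] at h
    simp [h] at hm0
  have hne1 : s₁.Nonempty := by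
    by_contra h
    rw [Set.not_nonempty_iff_eq_empty] at h
    simp [h] at hm1
  obtain ⟨y₀, hy₀⟩ := hne1
  have hbdd : BddAbove s₀ := ⟨y₀, fun x hx => (hlt x hx y₀ hy₀).le⟩
  set c := sSup s₀ with hc
  have hxc : ∀ x ∈ s₀, x ≤ c := fun x hx => le_csSup hbdd hx
  have hcy : ∀ y ∈ s₁, c ≤ y := fun y hy => csSup_le hne0 fun x hx => (hlt x hx y hy).le
  have hm0' : 0 < (μ (f ⁻¹' s₀)).toReal := ENNReal.toReal_pos hm0.ne' (measure_ne_top _ _)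
  have hm1' : 0 < (μ (f ⁻¹' s₁)).toReal := ENNReal.toReal_pos hm1.ne' (measure_ne_top _ _)
  -- lower bound for mean on s₁
  have h₀ : ∫ ω in f ⁻¹' s₀, f ω ∂μ < c * (μ (f ⁻¹' s₀)).toReal := by
    have hpos : 0 < ∫ ω in f ⁻¹' s₀, (c - f ω) ∂μ := by
      rw [setIntegral_pos_iff_support_of_nonneg_ae]
      · have hsub : (f ⁻¹' s₀) \ (f ⁻¹' {c}) ⊆ (Function.support fun ω => c - f ω) ∩ f ⁻¹' s₀ := by
          intro ω hω
          refine ⟨?_, hω.1⟩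
          simp only [Function.mem_support]
          have : f ω ≠ c := by simpa using hω.2
          exact sub_ne_zero.mpr (Ne.symm this)
        calc (0:ℝ≥0∞) < μ ((f ⁻¹' s₀) \ (f ⁻¹' {c})) := by rwa [measure_diff_null (hatom c)]
          _ ≤ _ := measure_mono hsub
      · filter_upwards [ae_restrict_mem (hf h0)] with ω hω
        have : f ω ≤ c := hxc _ hω
        simp only [Pi.zero_apply]
        linarith
      · exact ((integrable_const c).sub hfint).restrict
    have heq : ∫ ω in f ⁻¹' s₀, (c - f ω) ∂μ
        = c * (μ (f ⁻¹' s₀)).toReal - ∫ ω in f ⁻¹' s₀, f ω ∂μ := by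
      rw [integral_sub (integrable_const c).restrict hfint.restrict, setIntegral_const, smul_eq_mul, measureReal_def]
      ring
    linarith [heq ▸ hpos]
  have h₁ : c * (μ (f ⁻¹' s₁)).toReal < ∫ ω in f ⁻¹' s₁, f ω ∂μ := by
    have hpos : 0 < ∫ ω in f ⁻¹' s₁, (f ω - c) ∂μ := by
      rw [setIntegral_pos_iff_support_of_nonneg_ae]
      · have hsub : (f ⁻¹' s₁) \ (f ⁻¹' {c}) ⊆ (Function.support fun ω => f ω - c) ∩ f ⁻¹' s₁ := by
          intro ω hω
          refine ⟨?_, hω.1⟩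
          simp only [Function.mem_support]
          have : f ω ≠ c := by simpa using hω.2
          exact sub_ne_zero.mpr this
        calc (0:ℝ≥0∞) < μ ((f ⁻¹' s₁) \ (f ⁻¹' {c})) := by rwa [measure_diff_null (hatom c)]
          _ ≤ _ := measure_mono hsub
      · filter_upwards [ae_restrict_mem (hf h1)] with ω hω
        have : c ≤ f ω := hcy _ hω
        simp only [Pi.zero_apply]
        linarith
      · exact (hfint.sub (integrable_const c)).restrict
    have heq : ∫ ω in f ⁻¹' s₁, (f ω - c) ∂μ
        = (∫ ω in f ⁻¹' s₁, f ω ∂μ) - c * (μ (f ⁻¹' s₁)).toReal := by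
      rw [integral_sub hfint.restrict (integrable_const c).restrict, setIntegral_const, smul_eq_mul, measureReal_def]
      ring
    linarith [heq ▸ hpos]
  have hA : condMeanEvent μ f (f ⁻¹' s₀) < c := by
    rw [condMeanEvent, div_lt_iff₀ hm0']
    linarith
  have hB : c < condMeanEvent μ f (f ⁻¹' s₁) := by
    rw [condMeanEvent, lt_div_iff₀ hm1']
    linarith
  linarith

end AuxLemmas

/-- Covariance-driven dissociation.  Let `X ~ N_p(0, S)` with simple top
eigenvalue `lam₁ > lam₂ > 0` and unit leading eigenvector `u₁`; let `f = u₁ᵀX`.  Partition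
`{1,…,p}` into nonempty blocks `A`, `B`, with average loadings `ū_{1,A}`, `ū_{1,B}`.  Let
`I 0, …, I (K−1)` (`K ≥ 2`) be an interval partition of `ℝ`, ordered left to right, each of
positive probability under `f`.  With block conditional means
`m_{k,A} = (1/|A|) ∑_{j∈A} E[X_j | f ∈ I k]` (similarly `m_{k,B}`) and
`D_pop = max_{k<ℓ} max(|m_{k,A} − m_{ℓ,A}|, |m_{k,B} − m_{ℓ,B}|)`, if
`max(|ū_{1,A}|, |ū_{1,B}|) > 0` then
`D_pop ≥ max(|ū_{1,A}|, |ū_{1,B}|) · |E[f | f ∈ I_max] − E[f | f ∈ I_min]| > 0`.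
(`D_pop ≥ c` is expressed as: some pair `k < ℓ` attains at least `c`.) -/
theorem covariance_driven_dissociation
    {Ω : Type*} [m0 : MeasurableSpace Ω] (μ : Measure Ω) [IsProbabilityMeasure μ]
    {p : ℕ} (S : Matrix (Fin p) (Fin p) ℝ) (hS : S.PosDef)
    (X : Fin p → Ω → ℝ) (hX : ∀ i, Measurable (X i))
    (hGauss : ∀ l : Fin p → ℝ,
      Measure.map (fun ω => ∑ i, l i * X i ω) μ =
        gaussianReal 0 (Real.toNNReal (∑ i, ∑ j, l i * S i j * l j)))
    (u₁ : Fin p → ℝ) (hunit : ∑ i, (u₁ i) ^ 2 = 1)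
    (lam₁ lam₂ : ℝ) (hgap : lam₂ < lam₁) (hlam₂ : 0 < lam₂)
    (heig : S.mulVec u₁ = lam₁ • u₁)
    (hlead : ∀ (t : ℝ) (v : Fin p → ℝ), v ≠ 0 → S.mulVec v = t • v → t ≤ lam₁)
    (f : Ω → ℝ) (hf : f = fun ω => ∑ i, u₁ i * X i ω)
    -- blocks
    (A B : Finset (Fin p)) (hA : A.Nonempty) (hB : B.Nonempty)
    (hABdisj : Disjoint A B) (hABcover : A ∪ B = Finset.univ)
    -- interval partition of ℝ, ordered left to right
    (K : ℕ) (hK : 2 ≤ K) (I : Fin K → Set ℝ)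
    (hImeas : ∀ k, MeasurableSet (I k)) (hIint : ∀ k, (I k).OrdConnected)
    (hIcover : (⋃ k, I k) = Set.univ)
    (hIord : ∀ k l : Fin K, k < l → ∀ x ∈ I k, ∀ y ∈ I l, x < y)
    (hIpos : ∀ k, 0 < μ (f ⁻¹' I k))
    -- block means, filter means, and the lower bound
    (mA mB : Fin K → ℝ)
    (hmA : ∀ k, mA k = (∑ j ∈ A, condMeanEvent μ (X j) (f ⁻¹' I k)) / (A.card : ℝ))
    (hmB : ∀ k, mB k = (∑ j ∈ B, condMeanEvent μ (X j) (f ⁻¹' I k)) / (B.card : ℝ))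
    (ubarA ubarB : ℝ)
    (hubarA : ubarA = (∑ j ∈ A, u₁ j) / (A.card : ℝ))
    (hubarB : ubarB = (∑ j ∈ B, u₁ j) / (B.card : ℝ))
    (hload : 0 < max |ubarA| |ubarB|)
    (bound : ℝ)
    (hbound : bound = max |ubarA| |ubarB| *
      |condMeanEvent μ f (f ⁻¹' I ⟨K - 1, by omega⟩) -
        condMeanEvent μ f (f ⁻¹' I ⟨0, by omega⟩)|) :
    0 < bound ∧
      ∃ k l : Fin K, k < l ∧ bound ≤ max |mA k - mA l| |mB k - mB l| := by

  have hlam₁ : 0 < lam₁ := hlam₂.trans hgap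
  have hfmeas : Measurable f := by
    rw [hf]
    exact Finset.measurable_sum _ fun i _ => (hX i).const_mul (u₁ i)
  have hSsym : ∀ i j, S j i = S i j := fun i j => by
    have h := hS.1.apply i j
    simpa using h
  have hmulVec : ∀ i, ∑ j, S i j * u₁ j = lam₁ * u₁ i := by
    intro i
    have h := congrFun heig i
    simpa [Matrix.mulVec, dotProduct] using h
  have hvar : (∑ i, ∑ j, u₁ i * S i j * u₁ j) = lam₁ := by
    calc ∑ i, ∑ j, u₁ i * S i j * u₁ j = ∑ i, u₁ i * ∑ j, S i j * u₁ j := by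
          refine Finset.sum_congr rfl fun i _ => ?_
          rw [Finset.mul_sum]
          exact Finset.sum_congr rfl fun j _ => by ring
      _ = ∑ i, u₁ i * (lam₁ * u₁ i) := Finset.sum_congr rfl fun i _ => by rw [hmulVec i]
      _ = lam₁ * ∑ i, u₁ i ^ 2 := by
          rw [Finset.mul_sum]
          exact Finset.sum_congr rfl fun i _ => by ring
      _ = lam₁ := by rw [hunit, mul_one]
  have hmapf : Measure.map f μ = gaussianReal 0 (Real.toNNReal lam₁) := by
    have h := hGauss u₁
    rw [hvar] at h
    rw [hf]
    exact h
  have hfint : Integrable f μ := integrable_of_map_gaussian hfmeas hmapf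
  have hfatom : ∀ c : ℝ, μ (f ⁻¹' {c}) = 0 := by
    intro c
    have hv : Real.toNNReal lam₁ ≠ 0 := by
      simp only [ne_eq, Real.toNNReal_eq_zero, not_le]
      exact hlam₁
    have h : μ (f ⁻¹' {c}) = Measure.map f μ {c} :=
      (Measure.map_apply hfmeas (measurableSet_singleton c)).symm
    rw [h, hmapf]
    exact gaussianReal_absolutelyContinuous 0 hv Real.volume_singleton
  have hXint : ∀ j, Integrable (X j) μ := by
    intro j
    have h := hGauss (fun i => if i = j then (1:ℝ) else 0)
    have heqf : (fun ω => ∑ i, (if i = j then (1:ℝ) else 0) * X i ω) = X j := by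
      funext ω
      simp [Finset.sum_ite_eq']
    rw [heqf] at h
    exact integrable_of_map_gaussian (hX j) h
  set Y : Fin p → Ω → ℝ := fun j ω => X j ω - u₁ j * f ω with hYdef
  have hYmeas : ∀ j, Measurable (Y j) := fun j => (hX j).sub (hfmeas.const_mul (u₁ j))
  have hYint : ∀ j, Integrable (Y j) μ := fun j => (hXint j).sub (hfint.const_mul (u₁ j))
  set w : Fin p → Fin p → ℝ :=
    fun j i => (if i = j then (1:ℝ) else 0) - u₁ j * u₁ i with hwdef
  have hworth : ∀ j, ∑ i, w j i * u₁ i = 0 := by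
    intro j
    have h1 : ∑ i, w j i * u₁ i
        = (∑ i, (if i = j then (1:ℝ) else 0) * u₁ i) - u₁ j * ∑ i, u₁ i ^ 2 := by
      rw [Finset.mul_sum, ← Finset.sum_sub_distrib]
      refine Finset.sum_congr rfl fun i _ => ?_
      simp only [hwdef]
      ring
    rw [h1, hunit]
    simp [Finset.sum_ite_eq']
  have hcross1 : ∀ j, ∑ i, ∑ k, w j i * S i k * u₁ k = 0 := by
    intro j
    have h1 : ∀ i, ∑ k, w j i * S i k * u₁ k = w j i * (lam₁ * u₁ i) := by
      intro i
      rw [← hmulVec i, Finset.mul_sum]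
      exact Finset.sum_congr rfl fun k _ => by ring
    calc ∑ i, ∑ k, w j i * S i k * u₁ k = ∑ i, w j i * (lam₁ * u₁ i) :=
          Finset.sum_congr rfl fun i _ => h1 i
      _ = lam₁ * ∑ i, w j i * u₁ i := by
          rw [Finset.mul_sum]
          exact Finset.sum_congr rfl fun i _ => by ring
      _ = 0 := by rw [hworth j, mul_zero]
  have hcross2 : ∀ j, ∑ i, ∑ k, u₁ i * S i k * w j k = 0 := by
    intro j
    rw [Finset.sum_comm]
    have h1 : ∀ k, ∑ i, u₁ i * S i k * w j k = w j k * (lam₁ * u₁ k) := by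
      intro k
      rw [← hmulVec k, Finset.mul_sum]
      refine Finset.sum_congr rfl fun i _ => ?_
      rw [← hSsym i k]
      ring
    calc ∑ k, ∑ i, u₁ i * S i k * w j k = ∑ k, w j k * (lam₁ * u₁ k) :=
          Finset.sum_congr rfl fun k _ => h1 k
      _ = lam₁ * ∑ k, w j k * u₁ k := by
          rw [Finset.mul_sum]
          exact Finset.sum_congr rfl fun k _ => by ring
      _ = 0 := by rw [hworth j, mul_zero]
  have hQ : ∀ (j : Fin p) (a : ℝ),
      (∑ i, ∑ k, (u₁ i + a * w j i) * S i k * (u₁ k + a * w j k))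
      = (∑ i, ∑ k, u₁ i * S i k * u₁ k) + a ^ 2 * (∑ i, ∑ k, w j i * S i k * w j k) := by
    intro j a
    have expand : ∀ i k, (u₁ i + a * w j i) * S i k * (u₁ k + a * w j k)
        = u₁ i * S i k * u₁ k + a * (w j i * S i k * u₁ k) + a * (u₁ i * S i k * w j k)
          + a ^ 2 * (w j i * S i k * w j k) := fun i k => by ring
    simp only [expand, Finset.sum_add_distrib, ← Finset.mul_sum]
    rw [hcross1 j, hcross2 j]
    ring
  have hfun : ∀ (j : Fin p) (b : ℝ), (fun ω => f ω + b * Y j ω)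
      = fun ω => ∑ i, (u₁ i + b * w j i) * X i ω := by
    intro j b
    funext ω
    have h2 : ∑ i, (if i = j then (1:ℝ) else 0) * X i ω = X j ω := by
      simp [Finset.sum_ite_eq']
    have h1 : (∑ i, u₁ i * X i ω) + b * (∑ i, (if i = j then (1:ℝ) else 0) * X i ω)
          - b * u₁ j * (∑ i, u₁ i * X i ω)
        = ∑ i, (u₁ i + b * w j i) * X i ω := by
      rw [Finset.mul_sum, Finset.mul_sum, ← Finset.sum_add_distrib, ← Finset.sum_sub_distrib]
      refine Finset.sum_congr rfl fun i _ => ?_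
      simp only [hwdef]
      ring
    rw [← h1, h2]
    simp only [hYdef, hf]
    ring
  have hsym : ∀ (j : Fin p) (a : ℝ), Measure.map (fun ω => f ω + a * Y j ω) μ
      = Measure.map (fun ω => f ω + (-a) * Y j ω) μ := by
    intro j a
    rw [hfun j a, hfun j (-a), hGauss, hGauss, hQ j a, hQ j (-a), neg_sq]
  have horth : ∀ (j : Fin p) (k : Fin K), ∫ ω in f ⁻¹' I k, Y j ω ∂μ = 0 := fun j k =>
    setIntegral_eq_zero_of_sym μ hfmeas (hYmeas j) hfint (hYint j) (hsym j) (hImeas k)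
  have hXeq : ∀ (j : Fin p) (k : Fin K),
      ∫ ω in f ⁻¹' I k, X j ω ∂μ = u₁ j * ∫ ω in f ⁻¹' I k, f ω ∂μ := by
    intro j k
    have h := horth j k
    simp only [hYdef] at h
    rw [integral_sub (hXint j).restrict ((hfint.const_mul (u₁ j)).restrict),
      integral_const_mul] at h
    linarith
  have hcond : ∀ (j : Fin p) (k : Fin K),
      condMeanEvent μ (X j) (f ⁻¹' I k) = u₁ j * condMeanEvent μ f (f ⁻¹' I k) := by
    intro j k
    rw [condMeanEvent, condMeanEvent, hXeq j k, mul_div_assoc]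
  have hmA' : ∀ k, mA k = ubarA * condMeanEvent μ f (f ⁻¹' I k) := by
    intro k
    rw [hmA k, hubarA, Finset.sum_congr rfl fun j _ => hcond j k, ← Finset.sum_mul]
    ring
  have hmB' : ∀ k, mB k = ubarB * condMeanEvent μ f (f ⁻¹' I k) := by
    intro k
    rw [hmB k, hubarB, Finset.sum_congr rfl fun j _ => hcond j k, ← Finset.sum_mul]
    ring
  set k0 : Fin K := ⟨0, by omega⟩ with hk0
  set k1 : Fin K := ⟨K - 1, by omega⟩ with hk1
  have hk01 : k0 < k1 := by
    rw [hk0, hk1, Fin.mk_lt_mk]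
    omega
  have hEstrict : condMeanEvent μ f (f ⁻¹' I k0) < condMeanEvent μ f (f ⁻¹' I k1) :=
    condMean_strict μ hfmeas hfint hfatom (hImeas k0) (hImeas k1) (hIord k0 k1 hk01)
      (hIpos k0) (hIpos k1)
  have hbound' : bound = max |ubarA| |ubarB| *
      |condMeanEvent μ f (f ⁻¹' I k1) - condMeanEvent μ f (f ⁻¹' I k0)| := hbound
  refine ⟨?_, k0, k1, hk01, ?_⟩
  · rw [hbound']
    exact mul_pos hload (abs_pos.mpr (by linarith))
  · have h1 : mA k0 - mA k1 = ubarA *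
        (condMeanEvent μ f (f ⁻¹' I k0) - condMeanEvent μ f (f ⁻¹' I k1)) := by
      rw [hmA' k0, hmA' k1]; ring
    have h2 : mB k0 - mB k1 = ubarB *
        (condMeanEvent μ f (f ⁻¹' I k0) - condMeanEvent μ f (f ⁻¹' I k1)) := by
      rw [hmB' k0, hmB' k1]; ring
    rw [hbound', h1, h2, abs_mul, abs_mul, ← max_mul_of_nonneg _ _ (abs_nonneg _),
      abs_sub_comm (condMeanEvent μ f (f ⁻¹' I k1))]
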